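/- Let R be a semiprime ring with finitely many minimal primes. Then the following statements are equivalent: (1) every regular element of the centre Z(R) is a regular element of R, i.e. C_{Z(R)} ⊆ C_R; (2) C_{Z(R)} ∩ 𝔭 = ∅ for all 𝔭 ∈ min(R); (3) the map ρ_{R,min} : min(R) → min(Z(R)), 𝔭 ↦ 𝔭 ∩ Z(R), is a well-defined map (i.e. 𝔭 ∩ Z(R) is a minimal prime of Z(R) for every 𝔭 ∈ min(R)). -/

import Mathlib

/- Common framework: two-sided ideals, prime ideals, denominator sets and
   left localizations of (possibly noncommutative) rings, described
   axiomatically via their characteristic properties. -/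

namespace BavulaMinPrimes

/-- A subset of a ring is a two-sided ideal. -/
def IsIdealSet {R : Type*} [Ring R] (I : Set R) : Prop :=
  (0 : R) ∈ I ∧ (∀ a ∈ I, ∀ b ∈ I, a + b ∈ I) ∧ (∀ a ∈ I, -a ∈ I) ∧
    ∀ a ∈ I, ∀ r : R, r * a ∈ I ∧ a * r ∈ I

/-- A (two-sided) prime ideal: a proper ideal `P` such that `A * B ⊆ P`
implies `A ⊆ P` or `B ⊆ P` for all ideals `A`, `B`. -/
def IsPrimeIdealSet {R : Type*} [Ring R] (P : Set R) : Prop :=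
  IsIdealSet P ∧ P ≠ Set.univ ∧
    ∀ A B : Set R, IsIdealSet A → IsIdealSet B →
      (∀ a ∈ A, ∀ b ∈ B, a * b ∈ P) → A ⊆ P ∨ B ⊆ P

/-- A completely prime ideal: the factor ring is a domain. -/
def IsCompletelyPrimeIdealSet {R : Type*} [Ring R] (P : Set R) : Prop :=
  IsIdealSet P ∧ P ≠ Set.univ ∧ ∀ a b : R, a * b ∈ P → a ∈ P ∨ b ∈ P

/-- A minimal prime ideal of a ring. -/
def IsMinimalPrimeIdealSet {R : Type*} [Ring R] (P : Set R) : Prop :=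
  IsPrimeIdealSet P ∧ ∀ P' : Set R, IsPrimeIdealSet P' → P' ⊆ P → P' = P

/-- A prime minimal over an ideal `A`. -/
def IsMinimalPrimeOver {R : Type*} [Ring R] (A P : Set R) : Prop :=
  IsPrimeIdealSet P ∧ A ⊆ P ∧
    ∀ P' : Set R, IsPrimeIdealSet P' → A ⊆ P' → P' ⊆ P → P' = P

/-- The set `min(R)` of minimal primes of `R`. -/
def minPrimes (R : Type*) [Ring R] : Set (Set R) := { P | IsMinimalPrimeIdealSet P }

/-- The prime radical: intersection of all prime ideals. -/
def primeRadicalSet (R : Type*) [Ring R] : Set R :=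
  { r : R | ∀ P : Set R, IsPrimeIdealSet P → r ∈ P }

/-- A ring is semiprime if its prime radical is zero. -/
def IsSemiprimeRing (R : Type*) [Ring R] : Prop := primeRadicalSet R = {0}

/-- A ring is prime if its zero ideal is a prime ideal. -/
def IsPrimeRing (R : Type*) [Ring R] : Prop := IsPrimeIdealSet ({0} : Set R)

/-- A multiplicative subset: `1 ∈ S`, `0 ∉ S`, closed under multiplication. -/
def IsMulSet {R : Type*} [Ring R] (S : Set R) : Prop :=
  (1 : R) ∈ S ∧ (0 : R) ∉ S ∧ ∀ s ∈ S, ∀ t ∈ S, s * t ∈ S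

/-- The left Ore condition: `S r ∩ R s ≠ ∅`. -/
def LeftOre {R : Type*} [Ring R] (S : Set R) : Prop :=
  ∀ r : R, ∀ s ∈ S, ∃ s' ∈ S, ∃ r' : R, s' * r = r' * s

/-- The right Ore condition: `r S ∩ s R ≠ ∅`. -/
def RightOre {R : Type*} [Ring R] (S : Set R) : Prop :=
  ∀ r : R, ∀ s ∈ S, ∃ s' ∈ S, ∃ r' : R, r * s' = s * r'

/-- A left denominator set: a left Ore multiplicative set such that
`r s = 0` (with `s ∈ S`) implies `t r = 0` for some `t ∈ S`. -/
def IsLeftDenominatorSet {R : Type*} [Ring R] (S : Set R) : Prop :=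
  IsMulSet S ∧ LeftOre S ∧ ∀ r : R, ∀ s ∈ S, r * s = 0 → ∃ t ∈ S, t * r = 0

/-- A right denominator set. -/
def IsRightDenominatorSet {R : Type*} [Ring R] (S : Set R) : Prop :=
  IsMulSet S ∧ RightOre S ∧ ∀ r : R, ∀ s ∈ S, s * r = 0 → ∃ t ∈ S, r * t = 0

/-- `ass_l(S) = { r | s r = 0 for some s ∈ S }`. -/
def lAss {R : Type*} [Ring R] (S : Set R) : Set R := { r : R | ∃ s ∈ S, s * r = 0 }

/-- `f : R →+* Q` realizes `Q` as the left localization `S⁻¹R`: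
elements of `S` become units, every element of `Q` is a left fraction
`(f s)⁻¹ (f r)`, and the kernel of `f` is `ass_l(S)`.  These properties
characterize `S⁻¹R` up to a unique `R`-isomorphism. -/
structure IsLeftLocalization {R Q : Type*} [Ring R] [Ring Q]
    (S : Set R) (f : R →+* Q) : Prop where
  isUnit : ∀ s ∈ S, IsUnit (f s)
  surj : ∀ q : Q, ∃ s ∈ S, ∃ r : R, f s * q = f r
  ker : ∀ r : R, f r = 0 ↔ r ∈ lAss S

/-- `S⁻¹I = { s⁻¹ a | s ∈ S, a ∈ I }` as a subset of the localization `Q`: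
`q ∈ S⁻¹I` iff `f s * q = f a` for some `s ∈ S`, `a ∈ I`. -/
def locSet {R Q : Type*} [Ring R] [Ring Q] (f : R →+* Q) (S : Set R)
    (I : Set R) : Set Q :=
  { q : Q | ∃ s ∈ S, ∃ a ∈ I, f s * q = f a }

/-- A normal element: `R n = n R`. -/
def IsNormalElement {R : Type*} [Ring R] (n : R) : Prop :=
  (∀ r : R, ∃ r' : R, r * n = n * r') ∧ ∀ r : R, ∃ r' : R, n * r = r' * n

/-- A prime rich ring: every ideal contains a finite product of prime ideals
containing it (the empty product being the whole ring). -/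
def IsPrimeRich (R : Type*) [Ring R] : Prop :=
  ∀ A : Set R, IsIdealSet A →
    ∃ (n : ℕ) (P : Fin n → Set R),
      (∀ i, IsPrimeIdealSet (P i) ∧ A ⊆ P i) ∧
      ∀ x : Fin n → R, (∀ i, x i ∈ P i) → (List.ofFn x).prod ∈ A

/-- An ideal which is finitely generated as a right `R`-module. -/
def IsFGRightIdeal {R : Type*} [Ring R] (I : Set R) : Prop :=
  ∃ (m : ℕ) (g : Fin m → R), (∀ i, g i ∈ I) ∧
    ∀ x ∈ I, ∃ c : Fin m → R, x = ∑ i, g i * c i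

section Basic
variable {R : Type*} [Ring R]

lemma one_not_mem {P : Set R} (hI : IsIdealSet P) (hne : P ≠ Set.univ) : (1 : R) ∉ P := by
  intro h1
  apply hne
  ext r
  simp only [Set.mem_univ, iff_true]
  simpa using (hI.2.2.2 1 h1 r).1

lemma sInter_isIdealSet {S : Set (Set R)} (h : ∀ I ∈ S, IsIdealSet I) :
    IsIdealSet (⋂₀ S) := by
  refine ⟨fun I hI => (h I hI).1, fun a ha b hb I hI => (h I hI).2.1 a (ha I hI) b (hb I hI),
    fun a ha I hI => (h I hI).2.2.1 a (ha I hI),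
    fun a ha r => ⟨fun I hI => ((h I hI).2.2.2 a (ha I hI) r).1,
      fun I hI => ((h I hI).2.2.2 a (ha I hI) r).2⟩⟩

/-- key primality lemma for central elements -/
lemma mem_of_central_mul_mem {P : Set R} (hP : IsPrimeIdealSet P) {z : R}
    (hz : ∀ g : R, g * z = z * g) (hzP : z ∉ P) {x : R} (hx : z * x ∈ P) : x ∈ P := by
  have hA : IsIdealSet {y : R | ∃ a, y = z * a} := by
    refine ⟨⟨0, by simp⟩, ?_, ?_, ?_⟩
    · rintro _ ⟨a, rfl⟩ _ ⟨b, rfl⟩; exact ⟨a + b, (mul_add z a b).symm⟩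
    · rintro _ ⟨a, rfl⟩; exact ⟨-a, (mul_neg z a).symm⟩
    · rintro _ ⟨a, rfl⟩ r
      exact ⟨⟨r * a, by rw [← mul_assoc, hz r, mul_assoc]⟩, ⟨a * r, by rw [mul_assoc]⟩⟩
  have hB : IsIdealSet {y : R | z * y ∈ P} := by
    refine ⟨by simpa using hP.1.1, ?_, ?_, ?_⟩
    · intro a ha b hb; simp only [Set.mem_setOf_eq, mul_add] at *
      exact hP.1.2.1 _ ha _ hb
    · intro a ha; simp only [Set.mem_setOf_eq, mul_neg] at *
      exact hP.1.2.2.1 _ ha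
    · intro a ha r
      constructor
      · show z * (r * a) ∈ P
        rw [← mul_assoc, ← hz r, mul_assoc]
        exact (hP.1.2.2.2 _ ha r).1
      · show z * (a * r) ∈ P
        rw [← mul_assoc]
        exact (hP.1.2.2.2 _ ha r).2
  rcases hP.2.2 _ _ hA hB (by
    rintro _ ⟨a, rfl⟩ b hb
    have : z * a * b = a * (z * b) := by rw [← hz a, mul_assoc]
    rw [this]
    exact (hP.1.2.2.2 _ hb a).1) with h | h
  · exact absurd (h ⟨1, by simp⟩) hzP
  · exact h hx

lemma mem_of_mul_central_mem {P : Set R} (hP : IsPrimeIdealSet P) {z : R}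
    (hz : ∀ g : R, g * z = z * g) (hzP : z ∉ P) {x : R} (hx : x * z ∈ P) : x ∈ P :=
  mem_of_central_mul_mem hP hz hzP (by rwa [← hz x])

lemma inter_two_subset_prime {A B P : Set R} (hA : IsIdealSet A) (hB : IsIdealSet B)
    (hP : IsPrimeIdealSet P) (h : A ∩ B ⊆ P) : A ⊆ P ∨ B ⊆ P := by
  refine hP.2.2 A B hA hB fun a ha b hb => h ⟨(hA.2.2.2 a ha b).2, (hB.2.2.2 b hb a).1⟩

lemma finite_sInter_subset_prime {S : Set (Set R)} (hS : S.Finite)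
    {P : Set R} (hP : IsPrimeIdealSet P) (hid : ∀ I ∈ S, IsIdealSet I)
    (h : ⋂₀ S ⊆ P) : (∃ I ∈ S, I ⊆ P) ∨ (Set.univ : Set R) ⊆ P := by
  revert hid h
  refine Set.Finite.induction_on
    (motive := fun S _ => (∀ I ∈ S, IsIdealSet I) → ⋂₀ S ⊆ P →
      (∃ I ∈ S, I ⊆ P) ∨ (Set.univ : Set R) ⊆ P) S hS ?_ ?_
  · intro _ h; right; simpa using h
  · rintro I S hIS hSfin ih hid h
    rw [Set.sInter_insert] at h
    rcases inter_two_subset_prime (hid I (Set.mem_insert _ _))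
      (sInter_isIdealSet fun J hJ => hid J (Set.mem_insert_of_mem _ hJ)) hP h with h' | h'
    · exact Or.inl ⟨I, Set.mem_insert _ _, h'⟩
    · rcases ih (fun J hJ => hid J (Set.mem_insert_of_mem _ hJ)) h' with ⟨J, hJ, hJP⟩ | h''
      · exact Or.inl ⟨J, Set.mem_insert_of_mem _ hJ, hJP⟩
      · exact Or.inr h''

lemma exists_minimal_prime_le {P : Set R} (hP : IsPrimeIdealSet P) :
    ∃ p, IsMinimalPrimeIdealSet p ∧ p ⊆ P := by
  have H : ∀ c ⊆ {Q | IsPrimeIdealSet Q ∧ Q ⊆ P}, IsChain (· ⊆ ·) c → c.Nonempty →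
      ∃ lb ∈ {Q | IsPrimeIdealSet Q ∧ Q ⊆ P}, ∀ s ∈ c, lb ⊆ s := by
    intro c hcS hc hcne
    obtain ⟨Q₀, hQ₀⟩ := hcne
    have hprime : ∀ Q ∈ c, IsPrimeIdealSet Q := fun Q hQ => (hcS hQ).1
    refine ⟨⋂₀ c, ⟨⟨sInter_isIdealSet fun Q hQ => (hprime Q hQ).1, ?_, ?_⟩, ?_⟩,
      fun s hs => Set.sInter_subset_of_mem hs⟩
    · intro hI
      have h1 : (1:R) ∈ ⋂₀ c := hI ▸ Set.mem_univ 1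
      exact one_not_mem (hprime Q₀ hQ₀).1 (hprime Q₀ hQ₀).2.1 (h1 Q₀ hQ₀)
    · intro A B hA hB hAB
      by_cases hAI : A ⊆ ⋂₀ c
      · exact Or.inl hAI
      · right
        obtain ⟨a, haA, haI⟩ := Set.not_subset.mp hAI
        obtain ⟨Q₁, hQ₁c, haQ₁⟩ : ∃ Q₁ ∈ c, a ∉ Q₁ := by
          by_contra hcon
          push_neg at hcon
          exact haI fun Q hQ => hcon Q hQ
        intro b hb Q hQ
        have hprod : ∀ a' ∈ A, ∀ b' ∈ B, a' * b' ∈ Q₁ ∧ a' * b' ∈ Q := fun a' ha' b' hb' =>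
          ⟨hAB a' ha' b' hb' Q₁ hQ₁c, hAB a' ha' b' hb' Q hQ⟩
        rcases eq_or_ne Q Q₁ with rfl | hne
        · rcases (hprime Q hQ).2.2 A B hA hB (fun a' ha' b' hb' => (hprod a' ha' b' hb').1)
            with h | h
          · exact absurd (h haA) haQ₁
          · exact h hb
        · rcases hc hQ hQ₁c hne with hsub | hsub
          · rcases (hprime Q hQ).2.2 A B hA hB (fun a' ha' b' hb' => (hprod a' ha' b' hb').2)
            with h | h
            · exact absurd (hsub (h haA)) haQ₁
            · exact h hb
          · rcases (hprime Q₁ hQ₁c).2.2 A B hA hB (fun a' ha' b' hb' => (hprod a' ha' b' hb').1)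
            with h | h
            · exact absurd (h haA) haQ₁
            · exact hsub (h hb)
    · exact (Set.sInter_subset_of_mem hQ₀).trans (hcS hQ₀).2
  obtain ⟨m, hmP, hmin⟩ := zorn_superset_nonempty _ H P ⟨hP, Set.Subset.rfl⟩
  refine ⟨m, ⟨hmin.1.1, fun P' hP' hP'm => ?_⟩, hmin.1.2⟩
  exact hP'm.antisymm (hmin.2 ⟨hP', hP'm.trans hmin.1.2⟩ hP'm)

lemma mem_radical_of_forall_minimal {x : R}
    (h : ∀ p, IsMinimalPrimeIdealSet p → x ∈ p) : x ∈ primeRadicalSet R := by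
  intro P hP
  obtain ⟨p, hp, hpP⟩ := exists_minimal_prime_le hP
  exact hpP (h p hp)

end Basic

section Comm
variable {C : Type*} [CommRing C]

lemma isIdealSet_coe (I : Ideal C) : IsIdealSet (I : Set C) :=
  ⟨I.zero_mem, fun a ha b hb => I.add_mem ha hb, fun a ha => I.neg_mem ha,
    fun a ha r => ⟨I.mul_mem_left r ha, I.mul_mem_right r ha⟩⟩

open Classical in
noncomputable def idealOfSet (P : Set C) : Ideal C :=
  if h : IsIdealSet P then
    { carrier := P
      add_mem' := fun ha hb => h.2.1 _ ha _ hb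
      zero_mem' := h.1
      smul_mem' := fun c x hx => by simpa [smul_eq_mul] using (h.2.2.2 x hx c).1 }
  else ⊥

lemma coe_idealOfSet {P : Set C} (h : IsIdealSet P) : (idealOfSet P : Set C) = P := by
  rw [idealOfSet, dif_pos h]; rfl

lemma mem_idealOfSet {P : Set C} (h : IsIdealSet P) {x : C} :
    x ∈ idealOfSet P ↔ x ∈ P := by
  rw [← SetLike.mem_coe, coe_idealOfSet h]

lemma idealOfSet_isPrime {P : Set C} (hP : IsPrimeIdealSet P) : (idealOfSet P).IsPrime := by
  constructor
  · intro htop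
    have h1 : (1 : C) ∈ idealOfSet P := htop ▸ Submodule.mem_top
    exact one_not_mem hP.1 hP.2.1 ((mem_idealOfSet hP.1).mp h1)
  · intro a b hab
    have habP : a * b ∈ P := (mem_idealOfSet hP.1).mp hab
    have hprod : ∀ x ∈ ((Ideal.span {a} : Ideal C) : Set C),
        ∀ y ∈ ((Ideal.span {b} : Ideal C) : Set C), x * y ∈ P := by
      intro x hx y hy
      obtain ⟨c, rfl⟩ := Ideal.mem_span_singleton'.mp hx
      obtain ⟨d, rfl⟩ := Ideal.mem_span_singleton'.mp hy
      rw [mul_mul_mul_comm]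
      exact (hP.1.2.2.2 _ habP (c * d)).1
    rcases hP.2.2 _ _ (isIdealSet_coe _) (isIdealSet_coe _) hprod with h | h
    · exact Or.inl ((mem_idealOfSet hP.1).mpr (h (Ideal.mem_span_singleton_self a)))
    · exact Or.inr ((mem_idealOfSet hP.1).mpr (h (Ideal.mem_span_singleton_self b)))

/-- prime avoidance for finitely many custom primes -/
lemma avoid {T : Set (Set C)} (hT : T.Finite)
    (hprime : ∀ m ∈ T, IsPrimeIdealSet m) {P : Set C} (hP : IsIdealSet P)
    (h : P ⊆ ⋃₀ T) : ∃ m ∈ T, P ⊆ m := by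
  classical
  have hs : ∀ m ∈ hT.toFinset, m ≠ (∅ : Set C) → m ≠ (∅ : Set C) →
      (idealOfSet m).IsPrime := fun m hm _ _ =>
    idealOfSet_isPrime (hprime m (hT.mem_toFinset.mp hm))
  have hsub : ((idealOfSet P : Ideal C) : Set C) ⊆
      ⋃ m ∈ (hT.toFinset : Set (Set C)), ((idealOfSet m : Ideal C) : Set C) := by
    rw [coe_idealOfSet hP]
    intro x hx
    obtain ⟨m, hm, hxm⟩ := h hx
    refine Set.mem_biUnion (hT.mem_toFinset.mpr hm) ?_
    rw [coe_idealOfSet (hprime m hm).1]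
    exact hxm
  obtain ⟨m, hm, hle⟩ := (Ideal.subset_union_prime (∅ : Set C) (∅ : Set C) hs).mp hsub
  refine ⟨m, hT.mem_toFinset.mp hm, fun x hx => ?_⟩
  have hx' : x ∈ idealOfSet P := (mem_idealOfSet hP).mpr hx
  exact (mem_idealOfSet (hprime m (hT.mem_toFinset.mp hm)).1).mp (hle hx')

end Comm

lemma exists_minimal_member {α : Type*} {S : Set (Set α)} (hS : S.Finite) {X : Set α}
    (hX : X ∈ S) : ∃ m ∈ S, m ⊆ X ∧ ∀ y ∈ S, y ⊆ m → y = m := by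
  obtain ⟨m, ⟨hmS, hmX⟩, hmin⟩ := Set.Finite.exists_minimalFor id {y ∈ S | y ⊆ X}
    (hS.subset (Set.sep_subset _ _)) ⟨X, hX, Set.Subset.rfl⟩
  exact ⟨m, hmS, hmX, fun y hy hysub => hysub.antisymm (hmin ⟨hy, hysub.trans hmX⟩ hysub)⟩
section Main
variable {R : Type*} [Ring R]

def pull {R : Type*} [Ring R] (p : Set R) : Set (Subring.center R) := {z | (z : R) ∈ p}

lemma pullback_isPrime {p : Set R} (hp : IsPrimeIdealSet p) : IsPrimeIdealSet (pull p) := by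
  have hid : IsIdealSet (pull p) := by
    refine ⟨?_, ?_, ?_, ?_⟩
    · show ((0 : Subring.center R) : R) ∈ p
      rw [ZeroMemClass.coe_zero]; exact hp.1.1
    · intro a ha b hb
      show ((a + b : Subring.center R) : R) ∈ p
      rw [AddMemClass.coe_add]; exact hp.1.2.1 _ ha _ hb
    · intro a ha
      show ((-a : Subring.center R) : R) ∈ p
      rw [NegMemClass.coe_neg]; exact hp.1.2.2.1 _ ha
    · intro a ha r
      constructor
      · show ((r * a : Subring.center R) : R) ∈ p
        rw [MulMemClass.coe_mul]; exact (hp.1.2.2.2 _ ha _).1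
      · show ((a * r : Subring.center R) : R) ∈ p
        rw [MulMemClass.coe_mul]; exact (hp.1.2.2.2 _ ha _).2
  refine ⟨hid, ?_, ?_⟩
  · intro h
    have h1 : (1 : Subring.center R) ∈ pull p := h ▸ Set.mem_univ _
    have : ((1 : Subring.center R) : R) ∈ p := h1
    rw [OneMemClass.coe_one] at this
    exact one_not_mem hp.1 hp.2.1 this
  · intro A B hA hB hAB
    by_cases hAP : A ⊆ pull p
    · exact Or.inl hAP
    · right
      obtain ⟨a, haA, haP⟩ := Set.not_subset.mp hAP
      intro b hb
      have hcent : ∀ g : R, g * (a : R) = (a : R) * g := Subring.mem_center_iff.mp a.2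
      have hab : (a : R) * (b : R) ∈ p := by
        have := hAB a haA b hb
        have h' : ((a * b : Subring.center R) : R) ∈ p := this
        rwa [MulMemClass.coe_mul] at h'
      exact mem_of_central_mul_mem hp hcent haP hab

lemma sInter_pull_zero (hR : IsSemiprimeRing R) {z : Subring.center R}
    (h : ∀ q ∈ minPrimes R, z ∈ pull q) : z = 0 := by
  have hrad : (z : R) ∈ primeRadicalSet R :=
    mem_radical_of_forall_minimal (fun q hq => h q hq)
  have hR' : primeRadicalSet R = {0} := hR
  rw [hR'] at hrad
  exact Subtype.ext (by simpa using hrad)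

lemma key (hR : IsSemiprimeRing R) (hfin : (minPrimes R).Finite)
    (h2 : ∀ p ∈ minPrimes R, ∀ z : Subring.center R,
        z ∈ nonZeroDivisors (Subring.center R) → (z : R) ∉ p)
    {p p' : Set R} (hp : p ∈ minPrimes R) (hp' : p' ∈ minPrimes R)
    (hsub : pull p' ⊆ pull p) : pull p ⊆ pull p' := by
  by_contra hne
  set F : Set (Set (Subring.center R)) := pull '' minPrimes R with hF
  have hFfin : F.Finite := hfin.image _
  have hFprime : ∀ m ∈ F, IsPrimeIdealSet m := by
    rintro m ⟨q, hq, rfl⟩; exact pullback_isPrime hq.1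
  set M := {m ∈ F | ∀ y ∈ F, y ⊆ m → y = m} with hM
  have hMfin : M.Finite := hFfin.subset (Set.sep_subset _ _)
  have hnotsub : ∀ m ∈ M, ¬ pull p ⊆ m := by
    rintro m ⟨hmF, hmmin⟩ hpm
    have heq : pull p' = m := hmmin _ ⟨p', hp', rfl⟩ (hsub.trans hpm)
    rw [← heq] at hpm
    exact hne hpm
  have hnotunion : ¬ pull p ⊆ ⋃₀ M := by
    intro h
    obtain ⟨m, hm, hsub'⟩ := avoid hMfin (fun m hm => hFprime m hm.1)
      (pullback_isPrime hp.1).1 h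
    exact hnotsub m hm hsub'
  obtain ⟨z, hzp, hzM⟩ := Set.not_subset.mp hnotunion
  have hzreg : z ∈ nonZeroDivisors (Subring.center R) := by
    rw [mem_nonZeroDivisors_iff_right]
    intro w hw
    have hzw : z * w = 0 := by rw [mul_comm]; exact hw
    have hwall : ∀ q ∈ minPrimes R, w ∈ pull q := by
      intro q hq
      obtain ⟨m, hmF, hmq, hmmin⟩ := exists_minimal_member hFfin (⟨q, hq, rfl⟩ : pull q ∈ F)
      have hmM : m ∈ M := ⟨hmF, fun y hy hysub => hmmin y hy hysub⟩
      have hzm : z ∉ m := fun hzm => hzM ⟨m, hmM, hzm⟩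
      have hprime := hFprime m hmF
      have hwm : w ∈ m := mem_of_central_mul_mem hprime (fun g => mul_comm g z) hzm
        (by rw [hzw]; exact hprime.1.1)
      exact hmq hwm
    exact sInter_pull_zero hR hwall
  exact h2 p hp z hzreg hzp

lemma L21 (hR : IsSemiprimeRing R)
    (h2 : ∀ p ∈ minPrimes R, ∀ z : Subring.center R,
        z ∈ nonZeroDivisors (Subring.center R) → (z : R) ∉ p) :
    ∀ z : Subring.center R,
      z ∈ nonZeroDivisors (Subring.center R) → IsRegular (z : R) := by
  intro z hz
  have hR' : primeRadicalSet R = {0} := hR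
  have hcent : ∀ g : R, g * (z : R) = (z : R) * g := Subring.mem_center_iff.mp z.2
  constructor
  · intro a b hab
    have hab' : (z : R) * a = (z : R) * b := hab
    have h0 : (z : R) * (a - b) = 0 := by rw [mul_sub, hab', sub_self]
    have hmem : a - b ∈ primeRadicalSet R := by
      intro P hP
      obtain ⟨p, hpmin, hpP⟩ := exists_minimal_prime_le hP
      have hznot := h2 p hpmin z hz
      exact hpP (mem_of_central_mul_mem hpmin.1 hcent hznot
        (by rw [h0]; exact hpmin.1.1.1))
    rw [hR'] at hmem
    exact sub_eq_zero.mp (Set.mem_singleton_iff.mp hmem)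
  · intro a b hab
    have hab' : a * (z : R) = b * (z : R) := hab
    have h0 : (a - b) * (z : R) = 0 := by rw [sub_mul, hab', sub_self]
    have hmem : a - b ∈ primeRadicalSet R := by
      intro P hP
      obtain ⟨p, hpmin, hpP⟩ := exists_minimal_prime_le hP
      have hznot := h2 p hpmin z hz
      exact hpP (mem_of_mul_central_mem hpmin.1 hcent hznot
        (by rw [h0]; exact hpmin.1.1.1))
    rw [hR'] at hmem
    exact sub_eq_zero.mp (Set.mem_singleton_iff.mp hmem)

lemma L12 (hR : IsSemiprimeRing R) (hfin : (minPrimes R).Finite)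
    (h1 : ∀ z : Subring.center R,
        z ∈ nonZeroDivisors (Subring.center R) → IsRegular (z : R)) :
    ∀ p ∈ minPrimes R, ∀ z : Subring.center R,
      z ∈ nonZeroDivisors (Subring.center R) → (z : R) ∉ p := by
  intro p hp z hz hzp
  have hR' : primeRadicalSet R = {0} := hR
  set S := {q | q ∈ minPrimes R ∧ q ≠ p} with hS
  have hSfin : S.Finite := hfin.subset (fun q hq => hq.1)
  have hSid : ∀ I ∈ S, IsIdealSet I := fun I hI => hI.1.1.1
  have hnot : ¬ ⋂₀ S ⊆ p := by
    intro h
    rcases finite_sInter_subset_prime hSfin hp.1 hSid h with ⟨q, hqS, hqp⟩ | huniv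
    · exact hqS.2 (hp.2 q hqS.1.1 hqp)
    · exact hp.1.2.1 (Set.eq_univ_of_univ_subset huniv)
  obtain ⟨b, hbS, hbp⟩ := Set.not_subset.mp hnot
  have hzb : (z : R) * b ∈ primeRadicalSet R := by
    refine mem_radical_of_forall_minimal (fun q hq => ?_)
    by_cases hqp : q = p
    · subst hqp
      exact (hq.1.1.2.2.2 _ hzp b).2
    · exact (hq.1.1.2.2.2 b (hbS q ⟨hq, hqp⟩) (z : R)).1
  rw [hR'] at hzb
  have hzb0 : (z : R) * b = 0 := Set.mem_singleton_iff.mp hzb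
  have hb0 : b = 0 := (h1 z hz).left (show (z : R) * b = (z : R) * 0 by
    rw [mul_zero]; exact hzb0)
  exact hbp (hb0 ▸ hp.1.1.1)

lemma L23 (hR : IsSemiprimeRing R) (hfin : (minPrimes R).Finite)
    (h2 : ∀ p ∈ minPrimes R, ∀ z : Subring.center R,
        z ∈ nonZeroDivisors (Subring.center R) → (z : R) ∉ p) :
    ∀ p ∈ minPrimes R, IsMinimalPrimeIdealSet (pull p) := by
  intro p hp
  refine ⟨pullback_isPrime hp.1, ?_⟩
  intro q' hq' hsub
  have hInter : ⋂₀ (pull '' minPrimes R) ⊆ q' := by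
    intro z hz
    have hz0 : z = 0 := sInter_pull_zero hR (fun q hq => hz _ ⟨q, hq, rfl⟩)
    rw [hz0]; exact hq'.1.1
  rcases finite_sInter_subset_prime (hfin.image _) hq'
      (by rintro I ⟨q, hq, rfl⟩; exact (pullback_isPrime hq.1).1) hInter with
    ⟨I, ⟨q0, hq0, rfl⟩, hIq'⟩ | huniv
  · have hA : pull q0 ⊆ pull p := hIq'.trans hsub
    have hB : pull p ⊆ pull q0 := key hR hfin h2 hp hq0 hA
    exact Set.Subset.antisymm hsub (hB.trans hIq')
  · exact absurd (Set.eq_univ_of_univ_subset huniv) hq'.2.1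

lemma L32 (hR : IsSemiprimeRing R) (hfin : (minPrimes R).Finite)
    (h3 : ∀ p ∈ minPrimes R, IsMinimalPrimeIdealSet (pull p)) :
    ∀ p ∈ minPrimes R, ∀ z : Subring.center R,
      z ∈ nonZeroDivisors (Subring.center R) → (z : R) ∉ p := by
  intro p hp z hz hzp
  have hzp' : z ∈ pull p := hzp
  set S := {y ∈ pull '' minPrimes R | y ≠ pull p} with hS
  have hSfin : S.Finite := (hfin.image _).subset (Set.sep_subset _ _)
  have hSid : ∀ I ∈ S, IsIdealSet I := by
    rintro I ⟨⟨q, hq, rfl⟩, -⟩; exact (pullback_isPrime hq.1).1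
  have hnot : ¬ ⋂₀ S ⊆ pull p := by
    intro h
    rcases finite_sInter_subset_prime hSfin (h3 p hp).1 hSid h with
      ⟨I, ⟨⟨q, hq, rfl⟩, hIne⟩, hIsub⟩ | huniv
    · exact hIne ((h3 p hp).2 _ (pullback_isPrime hq.1) hIsub)
    · exact (pullback_isPrime hp.1).2.1 (Set.eq_univ_of_univ_subset huniv)
  obtain ⟨b, hbS, hbp⟩ := Set.not_subset.mp hnot
  have hzb : z * b = 0 := by
    refine sInter_pull_zero hR (fun q hq => ?_)
    by_cases hqe : pull q = pull p
    · rw [hqe]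
      exact (((pullback_isPrime hp.1).1).2.2.2 z hzp' b).2
    · exact (((pullback_isPrime hq.1).1).2.2.2 b (hbS _ ⟨⟨q, hq, rfl⟩, hqe⟩) z).1
  have hb0 : b = 0 := mem_nonZeroDivisors_iff_right.mp hz b (by rw [mul_comm]; exact hzb)
  exact hbp (hb0 ▸ (pullback_isPrime hp.1).1.1)

end Main


/-- Let `R` be a semiprime ring with finitely many minimal
primes.  TFAE: (1) `C_{Z(R)} ⊆ C_R`; (2) `C_{Z(R)} ∩ 𝔭 = ∅` for all
`𝔭 ∈ min(R)`; (3) the map `ρ_{R,min} : min(R) → min(Z(R))`,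
`𝔭 ↦ 𝔭 ∩ Z(R)`, is well defined. -/
theorem statement11 {R : Type*} [Ring R]
    (hR : IsSemiprimeRing R) (hfin : (minPrimes R).Finite) :
    ((∀ z : Subring.center R,
        z ∈ nonZeroDivisors (Subring.center R) → IsRegular (z : R)) ↔
      ∀ p ∈ minPrimes R, ∀ z : Subring.center R,
        z ∈ nonZeroDivisors (Subring.center R) → (z : R) ∉ p) ∧
    ((∀ z : Subring.center R,
        z ∈ nonZeroDivisors (Subring.center R) → IsRegular (z : R)) ↔
      ∀ p ∈ minPrimes R,
        IsMinimalPrimeIdealSet {z : Subring.center R | (z : R) ∈ p}) := by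
  refine ⟨⟨L12 hR hfin, L21 hR⟩,
    fun h1 => L23 hR hfin (L12 hR hfin h1), fun h3 => L21 hR (L32 hR hfin h3)⟩

end BavulaMinPrimes
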